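/- Let f₁, …, fₙ : (0, ∞) → ℂ be continuous, s₁, …, sₙ ∈ ℂ, and suppose that for every k and every t₀ > 0 the integrals G_{t₀}^{f₁,…,f_k}(s₁,…,s_k) := ∫_{0 ≤ t₁ ≤ ⋯ ≤ t_k ≤ t₀} ∏ f_i(t_i) t_i^{s_i−1} dt_i and F_{t₀}^{f_{k+1},…,fₙ}(s_{k+1},…,sₙ) := ∫_{t₀ ≤ t_{k+1} ≤ ⋯ ≤ tₙ < ∞} ∏ f_i(t_i) t_i^{s_i−1} dt_i converge absolutely and depend differentiably on t₀. Then the function t₀ ↦ Σ_{k=0}^{n} G_{t₀}^{f₁,…,f_k}(s₁,…,s_k) · F_{t₀}^{f_{k+1},…,fₙ}(s_{k+1},…,sₙ) is constant on (0, ∞). -/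

import Mathlib

open MeasureTheory

namespace Stmt17

/-- The upper simplex `{t₀ ≤ u₁ ≤ ⋯ ≤ u_m < ∞}` in `ℝᵐ`. -/
def simplexUpper (m : ℕ) (t₀ : ℝ) : Set (Fin m → ℝ) :=
  {u | (∀ i j : Fin m, i ≤ j → u i ≤ u j) ∧ ∀ i, t₀ ≤ u i}

/-- The lower simplex `{0 ≤ u₁ ≤ ⋯ ≤ u_m ≤ t₀}` in `ℝᵐ`. -/
def simplexLower (m : ℕ) (t₀ : ℝ) : Set (Fin m → ℝ) :=
  {u | (∀ i j : Fin m, i ≤ j → u i ≤ u j) ∧ ∀ i, 0 ≤ u i ∧ u i ≤ t₀}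

/-- The integrand `∏ᵢ f_{ι(i)}(uᵢ) uᵢ^{s_{ι(i)}−1}` attached to a selection
`ι : Fin m → Fin n`. -/
noncomputable def integrand {n m : ℕ} (f : Fin n → ℝ → ℂ) (s : Fin n → ℂ)
    (ι : Fin m → Fin n) (u : Fin m → ℝ) : ℂ :=
  ∏ i : Fin m, f (ι i) (u i) * (u i : ℂ) ^ (s (ι i) - 1)

/-- The selection of the first `k` indices `(f₁,…,f_k)`. -/
def ιlow {n : ℕ} (k : Fin (n + 1)) : Fin k.1 → Fin n :=
  fun j => ⟨j.1, by have := j.isLt; have := k.isLt; omega⟩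

/-- The selection of the last `n − k` indices `(f_{k+1},…,fₙ)`. -/
def ιhigh {n : ℕ} (k : Fin (n + 1)) : Fin (n - k.1) → Fin n :=
  fun j => ⟨k.1 + j.1, by have := j.isLt; have := k.isLt; omega⟩

/-- `G_{t₀}^{f₁,…,f_k}(s₁,…,s_k)`, the iterated integral over `{0 ≤ t₁ ≤ ⋯ ≤ t_k ≤ t₀}`. -/
noncomputable def G {n : ℕ} (f : Fin n → ℝ → ℂ) (s : Fin n → ℂ) (k : Fin (n + 1))
    (t₀ : ℝ) : ℂ :=
  ∫ u in simplexLower k.1 t₀, integrand f s (ιlow k) u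

/-- `F_{t₀}^{f_{k+1},…,fₙ}(s_{k+1},…,sₙ)`, the iterated integral over
`{t₀ ≤ t_{k+1} ≤ ⋯ ≤ tₙ < ∞}`. -/
noncomputable def F {n : ℕ} (f : Fin n → ℝ → ℂ) (s : Fin n → ℂ) (k : Fin (n + 1))
    (t₀ : ℝ) : ℂ :=
  ∫ u in simplexUpper (n - k.1) t₀, integrand f s (ιhigh k) u

/-! ### Auxiliary machinery -/


def σeq {n : ℕ} (k : Fin (n + 1)) : Fin k.1 ⊕ Fin (n - k.1) ≃ Fin n :=
  finSumFinEquiv.trans (finCongr (by have := k.isLt; omega))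

lemma σeq_inl {n : ℕ} (k : Fin (n + 1)) (i : Fin k.1) : σeq k (.inl i) = ιlow k i := by
  simp [σeq, ιlow, Fin.ext_iff]

lemma σeq_inr {n : ℕ} (k : Fin (n + 1)) (j : Fin (n - k.1)) : σeq k (.inr j) = ιhigh k j := by
  simp [σeq, ιhigh, Fin.ext_iff]

noncomputable def E {n : ℕ} (k : Fin (n + 1)) :
    (Fin k.1 → ℝ) × (Fin (n - k.1) → ℝ) ≃ᵐ (Fin n → ℝ) :=
  (MeasurableEquiv.sumPiEquivProdPi (fun _ => ℝ)).symm.trans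
    (MeasurableEquiv.piCongrLeft (fun _ => ℝ) (σeq k))

lemma E_mp {n : ℕ} (k : Fin (n + 1)) : MeasurePreserving (E k) volume volume :=
  (volume_measurePreserving_piCongrLeft (fun _ => ℝ) (σeq k)).comp
    (volume_measurePreserving_sumPiEquivProdPi_symm (fun _ => ℝ))

lemma E_apply_inl {n : ℕ} (k : Fin (n + 1)) (p : (Fin k.1 → ℝ) × (Fin (n - k.1) → ℝ))
    (i : Fin k.1) : E k p (ιlow k i) = p.1 i := by
  rw [← σeq_inl]
  show Equiv.piCongrLeft (fun _ => ℝ) (σeq k)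
      ((Equiv.sumPiEquivProdPi (fun _ => ℝ)).symm p) (σeq k (.inl i)) = p.1 i
  exact Equiv.piCongrLeft_sumInl (fun _ => ℝ) (σeq k) p.1 p.2 i

lemma E_apply_inr {n : ℕ} (k : Fin (n + 1)) (p : (Fin k.1 → ℝ) × (Fin (n - k.1) → ℝ))
    (j : Fin (n - k.1)) : E k p (ιhigh k j) = p.2 j := by
  rw [← σeq_inr]
  show Equiv.piCongrLeft (fun _ => ℝ) (σeq k)
      ((Equiv.sumPiEquivProdPi (fun _ => ℝ)).symm p) (σeq k (.inr j)) = p.2 j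
  exact Equiv.piCongrLeft_sumInr (fun _ => ℝ) (σeq k) p.1 p.2 j

lemma E_apply_low {n : ℕ} (k : Fin (n + 1)) (p : (Fin k.1 → ℝ) × (Fin (n - k.1) → ℝ))
    (i : Fin n) (h : i.1 < k.1) : E k p i = p.1 ⟨i.1, h⟩ := by
  have : i = ιlow k ⟨i.1, h⟩ := by simp [ιlow, Fin.ext_iff]
  exact (congrArg (E k p) this).trans (E_apply_inl k p ⟨i.1, h⟩)

lemma E_apply_high {n : ℕ} (k : Fin (n + 1)) (p : (Fin k.1 → ℝ) × (Fin (n - k.1) → ℝ))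
    (i : Fin n) (h : k.1 ≤ i.1) : E k p i = p.2 ⟨i.1 - k.1, by have := i.isLt; omega⟩ := by
  have : i = ιhigh k ⟨i.1 - k.1, by have := i.isLt; omega⟩ := by
    simp [ιhigh, Fin.ext_iff]; omega
  exact (congrArg (E k p) this).trans (E_apply_inr k p ⟨i.1 - k.1, by have := i.isLt; omega⟩)

/-- The piece of the full simplex where exactly the first `k` coordinates lie below `t₀`. -/
def B (n : ℕ) (t₀ : ℝ) (k : Fin (n + 1)) : Set (Fin n → ℝ) :=
  {u | (∀ i j : Fin n, i ≤ j → u i ≤ u j) ∧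
    ∀ i : Fin n, ((i : ℕ) < k.1 → 0 ≤ u i ∧ u i ≤ t₀) ∧ (k.1 ≤ (i : ℕ) → t₀ ≤ u i)}

lemma measurableSet_mono {m : ℕ} :
    MeasurableSet {u : Fin m → ℝ | ∀ i j : Fin m, i ≤ j → u i ≤ u j} := by
  have : {u : Fin m → ℝ | ∀ i j : Fin m, i ≤ j → u i ≤ u j} =
      ⋂ (i : Fin m) (j : Fin m), {u | i ≤ j → u i ≤ u j} := by
    ext u; simp [Set.mem_iInter]
  rw [this]
  refine MeasurableSet.iInter fun i => MeasurableSet.iInter fun j => ?_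
  by_cases h : i ≤ j
  · simp only [h, true_implies]
    exact measurableSet_le (measurable_pi_apply i) (measurable_pi_apply j)
  · simp [h]

lemma measurableSet_simplexLower {m : ℕ} {t₀ : ℝ} : MeasurableSet (simplexLower m t₀) := by
  have : simplexLower m t₀ = {u : Fin m → ℝ | ∀ i j : Fin m, i ≤ j → u i ≤ u j} ∩
      ⋂ i : Fin m, ({u | 0 ≤ u i} ∩ {u | u i ≤ t₀}) := by
    ext u; simp [simplexLower, Set.mem_iInter, forall_and]
  rw [this]
  refine measurableSet_mono.inter (MeasurableSet.iInter fun i => ?_)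
  exact (measurableSet_le measurable_const (measurable_pi_apply i)).inter
    (measurableSet_le (measurable_pi_apply i) measurable_const)

lemma measurableSet_simplexUpper {m : ℕ} {t₀ : ℝ} : MeasurableSet (simplexUpper m t₀) := by
  have : simplexUpper m t₀ = {u : Fin m → ℝ | ∀ i j : Fin m, i ≤ j → u i ≤ u j} ∩
      ⋂ i : Fin m, {u | t₀ ≤ u i} := by
    ext u; simp [simplexUpper, Set.mem_iInter]
  rw [this]
  exact measurableSet_mono.inter (MeasurableSet.iInter fun i =>
    measurableSet_le measurable_const (measurable_pi_apply i))

lemma measurableSet_B {n : ℕ} {t₀ : ℝ} {k : Fin (n + 1)} : MeasurableSet (B n t₀ k) := by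
  have : B n t₀ k = {u : Fin n → ℝ | ∀ i j : Fin n, i ≤ j → u i ≤ u j} ∩
      ⋂ i : Fin n, ({u | (i : ℕ) < k.1 → 0 ≤ u i ∧ u i ≤ t₀} ∩
        {u | k.1 ≤ (i : ℕ) → t₀ ≤ u i}) := by
    ext u; simp [B, Set.mem_iInter, forall_and]
  rw [this]
  refine measurableSet_mono.inter (MeasurableSet.iInter fun i => MeasurableSet.inter ?_ ?_)
  · by_cases h : (i : ℕ) < k.1
    · simp only [h, true_implies]
      exact (measurableSet_le measurable_const (measurable_pi_apply i)).inter
        (measurableSet_le (measurable_pi_apply i) measurable_const)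
    · simp [h]
  · by_cases h : k.1 ≤ (i : ℕ)
    · simp only [h, true_implies]
      exact measurableSet_le measurable_const (measurable_pi_apply i)
    · simp [h]

lemma E_preimage_B {n : ℕ} (k : Fin (n + 1)) (t₀ : ℝ) :
    E k ⁻¹' B n t₀ k = simplexLower k.1 t₀ ×ˢ simplexUpper (n - k.1) t₀ := by
  ext p
  constructor
  · rintro ⟨hmono, hbd⟩
    refine ⟨⟨fun i j hij => ?_, fun i => ?_⟩, ⟨fun i j hij => ?_, fun i => ?_⟩⟩
    · have := hmono (ιlow k i) (ιlow k j) hij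
      rwa [E_apply_inl, E_apply_inl] at this
    · have := (hbd (ιlow k i)).1 i.isLt
      rwa [E_apply_inl] at this
    · have := hmono (ιhigh k i) (ιhigh k j) (Nat.add_le_add_left hij k.1)
      rwa [E_apply_inr, E_apply_inr] at this
    · have := (hbd (ιhigh k i)).2 (Nat.le_add_right k.1 i.1)
      rwa [E_apply_inr] at this
  · rintro ⟨⟨hLm, hLb⟩, ⟨hUm, hUb⟩⟩
    refine ⟨fun i j hij => ?_, fun i => ⟨fun hi => ?_, fun hi => ?_⟩⟩
    · rcases lt_or_ge (i : ℕ) k.1 with hi | hi <;> rcases lt_or_ge (j : ℕ) k.1 with hj | hj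
      · rw [E_apply_low k p i hi, E_apply_low k p j hj]
        exact hLm _ _ hij
      · rw [E_apply_low k p i hi, E_apply_high k p j hj]
        exact le_trans (hLb _).2 (hUb _)
      · exact absurd (lt_of_le_of_lt (le_trans hi (Fin.le_def.mp hij)) hj) (lt_irrefl _)
      · rw [E_apply_high k p i hi, E_apply_high k p j hj]
        refine hUm _ _ ?_
        simp only [Fin.le_def]
        have := (Fin.le_def.mp hij); omega
    · rw [E_apply_low k p i hi]; exact ⟨(hLb _).1, (hLb _).2⟩
    · rw [E_apply_high k p i hi]; exact hUb _

lemma integrand_split {n : ℕ} (f : Fin n → ℝ → ℂ) (s : Fin n → ℂ) (k : Fin (n + 1))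
    (p : (Fin k.1 → ℝ) × (Fin (n - k.1) → ℝ)) :
    integrand f s id (E k p) =
      integrand f s (ιlow k) p.1 * integrand f s (ιhigh k) p.2 := by
  unfold integrand
  simp only [id_eq]
  rw [← Equiv.prod_comp (σeq k)
    (fun b => f b (E k p b) * ((E k p b : ℝ) : ℂ) ^ (s b - 1)),
    Fintype.prod_sum_type]
  congr 1
  · exact Finset.prod_congr rfl fun i _ => by rw [σeq_inl, E_apply_inl]
  · exact Finset.prod_congr rfl fun j _ => by rw [σeq_inr, E_apply_inr]

lemma integrableOn_B {n : ℕ} (f : Fin n → ℝ → ℂ) (s : Fin n → ℂ) (k : Fin (n + 1)) (t₀ : ℝ)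
    (hG : IntegrableOn (integrand f s (ιlow k)) (simplexLower k.1 t₀) volume)
    (hF : IntegrableOn (integrand f s (ιhigh k)) (simplexUpper (n - k.1) t₀) volume) :
    IntegrableOn (integrand f s id) (B n t₀ k) volume := by
  rw [← (E_mp k).integrableOn_comp_preimage (E k).measurableEmbedding, E_preimage_B]
  have h : IntegrableOn
      (fun p : (Fin k.1 → ℝ) × (Fin (n - k.1) → ℝ) =>
        integrand f s (ιlow k) p.1 * integrand f s (ιhigh k) p.2)
      (simplexLower k.1 t₀ ×ˢ simplexUpper (n - k.1) t₀) volume := by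
    rw [IntegrableOn, Measure.volume_eq_prod, ← Measure.prod_restrict]
    exact hG.mul_prod hF
  refine h.congr_fun (fun p _ => (integrand_split f s k p).symm) ?_
  exact ((measurableSet_simplexLower).prod (measurableSet_simplexUpper))

lemma integral_B {n : ℕ} (f : Fin n → ℝ → ℂ) (s : Fin n → ℂ) (k : Fin (n + 1)) (t₀ : ℝ) :
    ∫ u in B n t₀ k, integrand f s id u = G f s k t₀ * F f s k t₀ := by
  rw [← (E_mp k).setIntegral_preimage_emb (E k).measurableEmbedding (integrand f s id)
    (B n t₀ k), E_preimage_B]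
  calc ∫ p in simplexLower k.1 t₀ ×ˢ simplexUpper (n - k.1) t₀,
        integrand f s id (E k p)
      = ∫ p in simplexLower k.1 t₀ ×ˢ simplexUpper (n - k.1) t₀,
        integrand f s (ιlow k) p.1 * integrand f s (ιhigh k) p.2 := by
        exact setIntegral_congr_fun
          ((measurableSet_simplexLower).prod (measurableSet_simplexUpper))
          (fun p _ => integrand_split f s k p)
    _ = G f s k t₀ * F f s k t₀ := by
        rw [Measure.volume_eq_prod, setIntegral_prod_mul]; rfl


lemma B_subset {n : ℕ} {t₀ : ℝ} (ht : 0 < t₀) (k : Fin (n + 1)) :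
    B n t₀ k ⊆ simplexUpper n 0 := by
  rintro u ⟨hmono, hbd⟩
  refine ⟨hmono, fun i => ?_⟩
  rcases lt_or_ge (i : ℕ) k.1 with h | h
  · exact ((hbd i).1 h).1
  · exact le_of_lt (lt_of_lt_of_le ht ((hbd i).2 h))

lemma iUnion_B {n : ℕ} {t₀ : ℝ} (ht : 0 < t₀) :
    (⋃ k : Fin (n + 1), B n t₀ k) = simplexUpper n 0 := by
  apply Set.Subset.antisymm
  · exact Set.iUnion_subset fun k => B_subset ht k
  · rintro u ⟨hmono, hpos⟩
    set S : Set ℕ := {m | ∀ i : Fin n, m ≤ (i : ℕ) → t₀ < u i} with hS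
    have hn : n ∈ S := fun i hi => absurd i.isLt (by omega)
    have hKle : sInf S ≤ n := Nat.sInf_le hn
    refine Set.mem_iUnion.mpr ⟨⟨sInf S, by omega⟩, hmono,
      fun i => ⟨fun hi => ?_, fun hi => ?_⟩⟩
    · refine ⟨hpos i, ?_⟩
      by_contra hlt
      push_neg at hlt
      have hmem : (i : ℕ) ∈ S := fun j hj => lt_of_lt_of_le hlt (hmono i j hj)
      exact absurd (Nat.sInf_le hmem) (not_le.mpr hi)
    · exact le_of_lt (Nat.sInf_mem (⟨n, hn⟩ : S.Nonempty) i hi)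

lemma aedisjoint_B {n : ℕ} (t₀ : ℝ) :
    Pairwise (Function.onFun (MeasureTheory.AEDisjoint (volume : Measure (Fin n → ℝ))) (B n t₀)) := by
  have key : ∀ k k' : Fin (n + 1), k < k' →
      MeasureTheory.AEDisjoint volume (B n t₀ k) (B n t₀ k') := by
    intro k k' hlt
    have hlt' : k.1 < k'.1 := hlt
    have hkn : k.1 < n := by have := k'.isLt; omega
    refine measure_mono_null (fun u hu => ?_)
      (show volume {v : Fin n → ℝ | v ⟨k.1, hkn⟩ = t₀} = 0 by
        rw [volume_pi]; exact Measure.pi_hyperplane _ _ _)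
    obtain ⟨⟨_, hb1⟩, ⟨_, hb2⟩⟩ := hu
    have h1 := (hb1 ⟨k.1, hkn⟩).2 (le_refl _)
    have h2 := ((hb2 ⟨k.1, hkn⟩).1 hlt').2
    exact le_antisymm h2 h1
  intro k k' hne
  rcases lt_or_gt_of_ne hne with h | h
  · exact key _ _ h
  · exact (key _ _ h).symm

lemma sum_eq_full {n : ℕ} (f : Fin n → ℝ → ℂ) (s : Fin n → ℂ) (t₀ : ℝ) (ht : 0 < t₀)
    (hG : ∀ k : Fin (n + 1),
      IntegrableOn (integrand f s (ιlow k)) (simplexLower k.1 t₀) volume)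
    (hF : ∀ k : Fin (n + 1),
      IntegrableOn (integrand f s (ιhigh k)) (simplexUpper (n - k.1) t₀) volume) :
    ∑ k : Fin (n + 1), G f s k t₀ * F f s k t₀ =
      ∫ u in simplexUpper n 0, integrand f s id u := by
  have hint : ∀ k : Fin (n + 1), IntegrableOn (integrand f s id) (B n t₀ k) volume :=
    fun k => integrableOn_B f s k t₀ (hG k) (hF k)
  rw [← iUnion_B (n := n) ht,
    integral_iUnion_ae (fun k => measurableSet_B.nullMeasurableSet) (aedisjoint_B t₀)
      (integrableOn_finite_iUnion.mpr hint),
    tsum_fintype]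
  exact (Finset.sum_congr rfl fun k _ => integral_B f s k t₀).symm


/-- If all the iterated integrals `G_{t₀}^{f₁,…,f_k}` and `F_{t₀}^{f_{k+1},…,fₙ}`
converge absolutely and depend differentiably on `t₀ ∈ (0,∞)`, then
`t₀ ↦ Σ_{k=0}^{n} G_{t₀}^{f₁,…,f_k} · F_{t₀}^{f_{k+1},…,fₙ}` is constant on `(0,∞)`. -/
theorem stmt17 (n : ℕ) (f : Fin n → ℝ → ℂ) (s : Fin n → ℂ)
    (hf : ∀ i, ContinuousOn (f i) (Set.Ioi (0 : ℝ)))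
    (hGconv : ∀ (k : Fin (n + 1)) (t₀ : ℝ), 0 < t₀ →
      IntegrableOn (integrand f s (ιlow k)) (simplexLower k.1 t₀) volume)
    (hFconv : ∀ (k : Fin (n + 1)) (t₀ : ℝ), 0 < t₀ →
      IntegrableOn (integrand f s (ιhigh k)) (simplexUpper (n - k.1) t₀) volume)
    (hGdiff : ∀ k : Fin (n + 1), DifferentiableOn ℝ (G f s k) (Set.Ioi (0 : ℝ)))
    (hFdiff : ∀ k : Fin (n + 1), DifferentiableOn ℝ (F f s k) (Set.Ioi (0 : ℝ))) :
    ∀ t₀ t₁ : ℝ, 0 < t₀ → 0 < t₁ →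
      (∑ k : Fin (n + 1), G f s k t₀ * F f s k t₀) =
      (∑ k : Fin (n + 1), G f s k t₁ * F f s k t₁) := by

  intro t₀ t₁ ht₀ ht₁
  rw [sum_eq_full f s t₀ ht₀ (fun k => hGconv k t₀ ht₀) (fun k => hFconv k t₀ ht₀),
    sum_eq_full f s t₁ ht₁ (fun k => hGconv k t₁ ht₁) (fun k => hFconv k t₁ ht₁)]

end Stmt17
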